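/- The function φ : ℝᵐ → ℝ defined by φ(p) = ½‖(x̂ + Aᵀp)₊‖² − bᵀp is differentiable at every p ∈ ℝᵐ, with gradient g(p) = A(x̂ + Aᵀp)₊ − b. -/

import Mathlib

lemma hasDerivAt_max_sq (t : ℝ) :
    HasDerivAt (fun s : ℝ => (max 0 s)^2) (2 * max 0 t) t := by
  rcases lt_trichotomy t 0 with ht | ht | ht
  · have h0 : HasDerivAt (fun _ : ℝ => (0:ℝ)) (2 * max 0 t) t := by
      simpa [max_eq_left ht.le] using (hasDerivAt_const t (0:ℝ))
    refine h0.congr_of_eventuallyEq ?_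
    filter_upwards [eventually_lt_nhds ht] with s hs
    simp [max_eq_left hs.le]
  · subst ht
    rw [hasDerivAt_iff_isLittleO]
    simp only [max_self, mul_zero, smul_zero, sub_zero, ne_eq]
    rw [Asymptotics.isLittleO_iff]
    intro c hc
    filter_upwards [Metric.eventually_nhds_iff.2 ⟨c, hc, fun {y} hy => hy⟩] with s hs
    have h1 : (max 0 s)^2 ≤ s^2 := by
      rcases le_or_gt s 0 with h | h
      · simp [max_eq_left h, sq_nonneg]
      · simp [max_eq_right h.le]
    have h2 : |s| < c := by simpa [Real.dist_eq] using hs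
    calc ‖(max 0 s)^2 - 0^2‖ = (max 0 s)^2 := by
            rw [Real.norm_eq_abs]; simp [abs_of_nonneg (sq_nonneg (max 0 s))]
      _ ≤ s^2 := h1
      _ = |s| * |s| := by rw [← sq_abs]; ring
      _ ≤ c * |s| := mul_le_mul_of_nonneg_right h2.le (abs_nonneg s)
      _ = c * ‖s‖ := by rw [Real.norm_eq_abs]
  · have h0 : HasDerivAt (fun s : ℝ => s^2) (2 * max 0 t) t := by
      simpa [max_eq_right ht.le] using hasDerivAt_pow 2 t
    refine h0.congr_of_eventuallyEq ?_
    filter_upwards [eventually_gt_nhds ht] with s hs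
    simp [max_eq_right hs.le]

open Matrix

theorem phi_hasGradient {m n : ℕ} (A : Matrix (Fin m) (Fin n) ℝ)
    (b : Fin m → ℝ) (xhat : Fin n → ℝ)
    (φ : EuclideanSpace ℝ (Fin m) → ℝ)
    (hφ : ∀ p, φ p = (1/2) * ∑ j,
        (max 0 ((xhat + Aᵀ *ᵥ (WithLp.equiv 2 (Fin m → ℝ) p)) j))^2
        - b ⬝ᵥ (WithLp.equiv 2 (Fin m → ℝ) p)) :
    ∀ p : EuclideanSpace ℝ (Fin m),
      HasGradientAt φ
        ((WithLp.equiv 2 (Fin m → ℝ)).symm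
          (A *ᵥ (fun j => max 0 ((xhat + Aᵀ *ᵥ (WithLp.equiv 2 (Fin m → ℝ) p)) j)) - b))
        p := by
  intro p
  classical
  set e := WithLp.equiv 2 (Fin m → ℝ)
  set val : Fin n → ℝ := fun j => xhat j + (Aᵀ *ᵥ (e p)) j with hval
  set c : Fin n → EuclideanSpace ℝ (Fin m) := fun j => e.symm (fun i => A i j) with hc
  have hinner : ∀ (j) (v : EuclideanSpace ℝ (Fin m)), (inner ℝ (c j) v : ℝ) = ∑ i, A i j * (e v) i := by
    intro j v
    simp only [hc, PiLp.inner_apply, RCLike.inner_apply, conj_trivial,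
      WithLp.equiv_symm_apply, PiLp.toLp_apply]
    exact Finset.sum_congr rfl fun i _ => mul_comm _ _
  have haff : ∀ j, HasFDerivAt (fun v : EuclideanSpace ℝ (Fin m) => xhat j + (Aᵀ *ᵥ (e v)) j)
      (innerSL ℝ (c j)) p := by
    intro j
    have h1 : HasFDerivAt (fun v : EuclideanSpace ℝ (Fin m) => (inner ℝ (c j) v : ℝ)) (innerSL ℝ (c j)) p :=
      (innerSL ℝ (c j)).hasFDerivAt
    have hfun : (fun v : EuclideanSpace ℝ (Fin m) => xhat j + (Aᵀ *ᵥ (e v)) j)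
        = fun v : EuclideanSpace ℝ (Fin m) => xhat j + (inner ℝ (c j) v : ℝ) := by
      funext v
      rw [hinner]
      simp [mulVec, dotProduct, transpose_apply]
    rw [hfun]
    exact h1.const_add (xhat j)
  have hcomp : ∀ j, HasFDerivAt (fun v : EuclideanSpace ℝ (Fin m) => (max 0 (xhat j + (Aᵀ *ᵥ (e v)) j))^2)
      ((2 * max 0 (val j)) • innerSL ℝ (c j)) p :=
    fun j => by have := (hasDerivAt_max_sq (val j)).comp_hasFDerivAt p (haff j); exact this
  have hsum : HasFDerivAt (fun v : EuclideanSpace ℝ (Fin m) => ∑ j, (max 0 (xhat j + (Aᵀ *ᵥ (e v)) j))^2)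
      (∑ j, (2 * max 0 (val j)) • innerSL ℝ (c j)) p :=
    HasFDerivAt.fun_sum fun j _ => hcomp j
  have hinner' : ∀ (w : Fin m → ℝ) (v : EuclideanSpace ℝ (Fin m)), (inner ℝ (e.symm w) v : ℝ) = ∑ i, w i * (e v) i := by
    intro w v
    simp only [PiLp.inner_apply, RCLike.inner_apply, conj_trivial, e,
      WithLp.equiv_symm_apply, PiLp.toLp_apply]
    exact Finset.sum_congr rfl fun i _ => mul_comm _ _
  have hb : HasFDerivAt (fun v : EuclideanSpace ℝ (Fin m) => b ⬝ᵥ (e v)) (innerSL ℝ (e.symm b)) p := by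
    have h1 : HasFDerivAt (fun v : EuclideanSpace ℝ (Fin m) => (inner ℝ (e.symm b) v : ℝ)) (innerSL ℝ (e.symm b)) p :=
      (innerSL ℝ (e.symm b)).hasFDerivAt
    have hfun : (fun v : EuclideanSpace ℝ (Fin m) => b ⬝ᵥ (e v)) = fun v : EuclideanSpace ℝ (Fin m) => (inner ℝ (e.symm b) v : ℝ) := by
      funext v
      simp only [hinner']
      simp [dotProduct]
    rw [hfun]; exact h1
  have htotal := (hsum.const_mul (1/2)).sub hb
  have hφeq : φ = fun v : EuclideanSpace ℝ (Fin m) => (1/2) * ∑ j, (max 0 (xhat j + (Aᵀ *ᵥ (e v)) j))^2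
      - b ⬝ᵥ (e v) := by
    funext v
    rw [hφ v]
    simp [Pi.add_apply]
  rw [hasGradientAt_iff_hasFDerivAt, hφeq]
  have hDeq : (InnerProductSpace.toDual ℝ (EuclideanSpace ℝ (Fin m)))
        (e.symm (A *ᵥ (fun j => max 0 ((xhat + Aᵀ *ᵥ (e p)) j)) - b))
      = (1/2 : ℝ) • (∑ j, (2 * max 0 (val j)) • innerSL ℝ (c j)) - innerSL ℝ (e.symm b) := by
    ext v
    simp only [InnerProductSpace.toDual_apply_apply, ContinuousLinearMap.coe_sub',
      Pi.sub_apply, ContinuousLinearMap.coe_smul', Pi.smul_apply,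
      ContinuousLinearMap.coe_sum', Finset.sum_apply, innerSL_apply_apply, smul_eq_mul]
    simp only [hinner', hinner]
    simp only [mulVec, dotProduct, Pi.sub_apply, sub_mul, Finset.sum_sub_distrib,
      Finset.sum_mul, Finset.mul_sum]
    rw [Finset.sum_comm]
    have : ∀ j, max 0 ((xhat + Aᵀ *ᵥ (e p)) j) = max 0 (val j) := by
      intro j; simp [hval, Pi.add_apply]
    simp only [this]
    ring_nf
    rw [sub_eq_neg_add]
    congr 1
    refine Finset.sum_congr rfl fun j _ => Finset.sum_congr rfl fun i _ => ?_
    show A i j * (0 ⊔ (xhat j + (Aᵀ *ᵥ e p) j)) * e v i = (0 ⊔ val j) * A i j * e v i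
    rw [hval]
    ring
  rw [hDeq]
  exact htotal
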